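/- Let k ≥ 2, α, β, μ > 0, let ℓ ≥ 3 be odd, and set θ = min{α/4, β/(2ℓ)}. If Ψ is a k-uniform (α, β, ℓ, μ)-constellation on n ≥ 6k vertices and S, X ⊆ V(Ψ) are disjoint with |S| ≤ k − 2 and |X| ≤ θn, then the constellation Ψ_S − X (the link constellation of S with the vertices of X removed) is an (α/2, β/2, ℓ, 2μ)-constellation. -/

import Mathlib

open Finset

structure Constellation (V : Type*) [DecidableEq V] where
  verts : Finset V
  edges : Finset (Finset V)
  W : Finset V → Finset V

namespace Constellation

variable {V : Type*} [DecidableEq V]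

/-- The link constellation `Ψ_S`. -/
def link (Ψ : Constellation V) (S : Finset V) : Constellation V where
  verts := Ψ.verts \ S
  edges := (Ψ.edges.filter fun e => S ⊆ e).image (· \ S)
  W := fun x => Ψ.W (x ∪ S) \ S

/-- The induced subconstellation `Ψ[X]`. -/
def induce (Ψ : Constellation V) (X : Finset V) : Constellation V where
  verts := Ψ.verts ∩ X
  edges := Ψ.edges.filter fun e => e ⊆ X
  W := fun x => Ψ.W x ∩ X

/-- `Ψ - X`. -/
def remove (Ψ : Constellation V) (X : Finset V) : Constellation V :=
  Ψ.induce (Ψ.verts \ X)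

end Constellation

/-- `Ψ` is a `k`-uniform constellation. -/
def IsUniformConst {V : Type*} [DecidableEq V] (k : ℕ) (Ψ : Constellation V) : Prop :=
  ∀ e ∈ Ψ.edges, e ⊆ Ψ.verts ∧ e.card = k

/-- `ζ`-leftconnectability of a `(k-1)`-tuple (as a list) in a `k`-uniform constellation. -/
def LeftConn {V : Type*} [DecidableEq V] : ℕ → Constellation V → ℝ → List V → Prop
  | 0, _, _, _ => False
  | 1, _, _, _ => False
  | 2, Ψ, _, xs => xs.length = 1 ∧ ∀ v ∈ xs, v ∈ Ψ.W ∅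
  | (k + 3), Ψ, ζ, xs =>
      xs.length = k + 2 ∧
      ζ * (Ψ.verts.card : ℝ) ≤
        (({z : V | z ∈ Ψ.verts ∧ insert z xs.toFinset ∈ Ψ.edges ∧
            LeftConn (k + 2) (Ψ.link {z}) ζ xs.tail} : Set V).ncard : ℝ)

def RightConn {V : Type*} [DecidableEq V] (k : ℕ) (Ψ : Constellation V) (ζ : ℝ)
    (xs : List V) : Prop :=
  LeftConn k Ψ ζ xs.reverse

def Conn {V : Type*} [DecidableEq V] (k : ℕ) (Ψ : Constellation V) (ζ : ℝ)
    (xs : List V) : Prop :=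
  LeftConn k Ψ ζ xs ∧ RightConn k Ψ ζ xs

/-- A `ζ`-bridge. -/
def IsBridge {V : Type*} [DecidableEq V] (k : ℕ) (Ψ : Constellation V) (ζ : ℝ)
    (x : Fin k → V) : Prop :=
  Finset.image x Finset.univ ∈ Ψ.edges ∧
  RightConn k Ψ ζ (List.ofFn x).dropLast ∧
  LeftConn k Ψ ζ (List.ofFn x).tail

/-- number of edges of the link graph of `x` crossing between `V(R_x)` and its complement. -/
def crossCount {V : Type*} [DecidableEq V] (Ψ : Constellation V) (x : Finset V) : ℕ :=
  ((Ψ.link x).edges.filter fun p => (p ∩ Ψ.W x).Nonempty ∧ (p \ Ψ.W x).Nonempty).card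

/-- `Ψ` is an `(α, μ)`-constellation. -/
def IsAMConst {V : Type*} [DecidableEq V] (k : ℕ) (Ψ : Constellation V) (α μ : ℝ) : Prop :=
  IsUniformConst k Ψ ∧
  ∀ x : Finset V, x ⊆ Ψ.verts → x.card = k - 2 →
    ((5 / 9 + α) * (Ψ.verts.card : ℝ) ^ 2 / 2 ≤
        ((Ψ.edges.filter fun e => x ⊆ e).card : ℝ)) ∧
    Ψ.W x ⊆ Ψ.verts ∧
    ((2 / 3 + α / 2) * (Ψ.verts.card : ℝ) ≤ ((Ψ.W x).card : ℝ)) ∧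
    ((crossCount Ψ x : ℝ) ≤ μ * (Ψ.verts.card : ℝ) ^ 2)

/-- number of `y`-`z`-paths of length `ℓ` in `R_x`. -/
noncomputable def pathCount {V : Type*} [DecidableEq V] (Ψ : Constellation V) (x : Finset V)
    (y z : V) (ℓ : ℕ) : ℕ :=
  ({ l : List V | l.length = ℓ + 1 ∧ l.Nodup ∧ (∀ v ∈ l, v ∈ Ψ.W x) ∧
      l.head? = some y ∧ l.getLast? = some z ∧
      l.Chain' (fun u v => ({u, v} : Finset V) ∈ (Ψ.link x).edges) } : Set (List V)).ncard

/-- `Ψ` is an `(α, β, ℓ, μ)`-constellation. -/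
def IsConst {V : Type*} [DecidableEq V] (k : ℕ) (Ψ : Constellation V)
    (α β : ℝ) (ℓ : ℕ) (μ : ℝ) : Prop :=
  IsAMConst k Ψ α μ ∧
  ∀ x : Finset V, x ⊆ Ψ.verts → x.card = k - 2 →
    ∀ y ∈ Ψ.W x, ∀ z ∈ Ψ.W x, y ≠ z →
      β * (Ψ.verts.card : ℝ) ^ (ℓ - 1) ≤ (pathCount Ψ x y z ℓ : ℝ)

/-- `x` is a walk (of `m` vertices) in the `k`-uniform hypergraph with edge set `E`. -/
def IsWalk {V : Type*} [DecidableEq V] (E : Finset (Finset V)) (k m : ℕ)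
    (x : Fin m → V) : Prop :=
  ∀ i : ℕ, ∀ h : i + k ≤ m,
    Finset.image (fun j : Fin k => x ⟨i + j.1, by have := j.2; omega⟩) Finset.univ ∈ E

/-- `l` is a path in the `k`-uniform hypergraph with edge set `E`. -/
def IsPathList {V : Type*} [DecidableEq V] (E : Finset (Finset V)) (k : ℕ)
    (l : List V) : Prop :=
  l.Nodup ∧ ∀ i : ℕ, i + k ≤ l.length → ((l.drop i).take k).toFinset ∈ E

section Stmt14Aux

variable {V : Type*} [DecidableEq V]

private lemma insertIdx_getElem_eraseIdx : ∀ (l : List V) (i : ℕ) (h : i < l.length),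
    (l.eraseIdx i).insertIdx i l[i] = l := by
  intro l
  induction l with
  | nil => intro i h; simp at h
  | cons a t ih =>
    intro i h
    cases i with
    | zero => simp [List.eraseIdx, List.insertIdx]
    | succ i =>
      rw [List.eraseIdx_cons_succ, List.getElem_cons_succ, List.insertIdx_succ_cons,
        ih i (by simpa using h)]

/-- Finset of lists of a given length with all entries in `T`. -/
private def listsOf (T : Finset V) : ℕ → Finset (List V)
  | 0 => {[]}
  | m + 1 => T.biUnion fun a => (listsOf T m).image (a :: ·)

private lemma mem_listsOf {T : Finset V} {m : ℕ} {l : List V} :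
    l ∈ listsOf T m ↔ l.length = m ∧ ∀ v ∈ l, v ∈ T := by
  induction m generalizing l with
  | zero =>
    simp only [listsOf, Finset.mem_singleton]
    constructor
    · rintro rfl; simp
    · rintro ⟨h1, -⟩; exact List.length_eq_zero_iff.mp h1
  | succ m ih =>
    simp only [listsOf, Finset.mem_biUnion, Finset.mem_image]
    constructor
    · rintro ⟨a, ha, l', hl', rfl⟩
      obtain ⟨h1, h2⟩ := ih.mp hl'
      refine ⟨by simp [h1], ?_⟩
      intro v hv
      rcases List.mem_cons.mp hv with rfl | hvl
      · exact ha
      · exact h2 v hvl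
    · rintro ⟨h1, h2⟩
      cases l with
      | nil => simp at h1
      | cons a l' =>
        exact ⟨a, h2 a (by simp), l',
          ih.mpr ⟨by simpa using h1, fun v hv => h2 v (by simp [hv])⟩, rfl⟩

private lemma card_listsOf (T : Finset V) (m : ℕ) : (listsOf T m).card = T.card ^ m := by
  induction m with
  | zero => simp [listsOf]
  | succ m ih =>
    rw [listsOf, Finset.card_biUnion, pow_succ]
    · have hc : ∀ a ∈ T, ((listsOf T m).image (a :: ·)).card = T.card ^ m := by
        intro a _
        rw [Finset.card_image_of_injective _ (fun l1 l2 h => by simpa using h), ih]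
      rw [Finset.sum_congr rfl hc, Finset.sum_const, smul_eq_mul, mul_comm]
    · intro a _ b _ hab
      simp only [Finset.disjoint_left, Finset.mem_image]
      rintro l ⟨l1, -, rfl⟩ ⟨l2, -, h⟩
      exact hab (by simpa using (List.cons_eq_cons.mp h).1.symm)

private lemma chain'_mono_mem {P : V → Prop} {R R' : V → V → Prop}
    (h : ∀ u v, P u → P v → R u v → R' u v) :
    ∀ {l : List V}, (∀ v ∈ l, P v) → l.Chain' R → l.Chain' R' := by
  intro l
  induction l with
  | nil => intro _ _; exact List.isChain_nil
  | cons a t ih =>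
    cases t with
    | nil => intro _ _; exact List.isChain_singleton _
    | cons b t2 =>
      intro hP hc
      simp only [List.Chain', List.isChain_cons_cons] at hc ⊢
      exact ⟨h _ _ (hP a (by simp)) (hP b (by simp)) hc.1,
        ih (fun v hv => hP v (List.mem_cons_of_mem a hv)) hc.2⟩

private lemma mem_link_edges {Ψ : Constellation V} {x p : Finset V} :
    p ∈ (Ψ.link x).edges ↔ ∃ e ∈ Ψ.edges, x ⊆ e ∧ e \ x = p := by
  simp only [Constellation.link, Finset.mem_image, Finset.mem_filter]
  constructor
  · rintro ⟨e, ⟨he, hxe⟩, rfl⟩; exact ⟨e, he, hxe, rfl⟩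
  · rintro ⟨e, he, hxe, rfl⟩; exact ⟨e, ⟨he, hxe⟩, rfl⟩

private lemma remove_link_verts (Ψ : Constellation V) (S X : Finset V) :
    ((Ψ.link S).remove X).verts = (Ψ.verts \ S) \ X := by
  show (Ψ.verts \ S) ∩ ((Ψ.verts \ S) \ X) = _
  exact Finset.inter_eq_right.mpr Finset.sdiff_subset

private lemma remove_link_W (Ψ : Constellation V) (S X x : Finset V) :
    ((Ψ.link S).remove X).W x = (Ψ.W (x ∪ S) \ S) ∩ ((Ψ.verts \ S) \ X) := rfl

private lemma mem_remove_link_edges {Ψ : Constellation V}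
    (huni : ∀ e ∈ Ψ.edges, e ⊆ Ψ.verts) {S X : Finset V} (hSX : Disjoint S X)
    {f : Finset V} :
    f ∈ ((Ψ.link S).remove X).edges ↔
      ∃ e ∈ Ψ.edges, S ⊆ e ∧ e ∩ X = ∅ ∧ f = e \ S := by
  show f ∈ ((Ψ.link S).edges).filter (fun e => e ⊆ (Ψ.link S).verts \ X) ↔ _
  simp only [Finset.mem_filter, mem_link_edges]
  constructor
  · rintro ⟨⟨e, he, hSe, rfl⟩, hsub⟩
    refine ⟨e, he, hSe, ?_, rfl⟩
    rw [Finset.eq_empty_iff_forall_notMem]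
    intro v hv
    rw [Finset.mem_inter] at hv
    by_cases hvS : v ∈ S
    · exact (Finset.disjoint_left.mp hSX hvS) hv.2
    · have hm : v ∈ e \ S := Finset.mem_sdiff.mpr ⟨hv.1, hvS⟩
      exact (Finset.mem_sdiff.mp (hsub hm)).2 hv.2
  · rintro ⟨e, he, hSe, heX, rfl⟩
    refine ⟨⟨e, he, hSe, rfl⟩, ?_⟩
    intro v hv
    rw [Finset.mem_sdiff] at hv
    refine Finset.mem_sdiff.mpr ⟨Finset.mem_sdiff.mpr ⟨huni e he hv.1, hv.2⟩, fun hvX => ?_⟩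
    rw [Finset.eq_empty_iff_forall_notMem] at heX
    exact heX v (Finset.mem_inter.mpr ⟨hv.1, hvX⟩)

open Classical in
private lemma pathCount_eq_card (Ψ : Constellation V) (x : Finset V) (y z : V) (m : ℕ) :
    pathCount Ψ x y z m = ((listsOf (Ψ.W x) (m + 1)).filter fun l =>
      l.Nodup ∧ l.head? = some y ∧ l.getLast? = some z ∧
      l.Chain' (fun u v => ({u, v} : Finset V) ∈ (Ψ.link x).edges)).card := by
  rw [pathCount, ← Set.ncard_coe_finset]
  congr 1
  ext l
  simp only [Set.mem_setOf_eq, Finset.coe_filter, mem_listsOf]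
  tauto

private lemma getElem_idx_congr (l : List V) {i j : ℕ} (h : i = j) (hi : i < l.length) :
    l[i] = l[j]'(h ▸ hi) := by subst h; rfl

private lemma path_list_facts {X : Finset V} {y z : V} {m : ℕ} (hm : 2 ≤ m) {l : List V}
    (hlen : l.length = m + 1) (hhead : l.head? = some y) (hlast : l.getLast? = some z)
    (hyX : y ∉ X) (hzX : z ∉ X) (hex : ∃ v ∈ l, v ∈ X) :
    1 ≤ l.findIdx (fun v => decide (v ∈ X)) ∧ l.findIdx (fun v => decide (v ∈ X)) < m ∧
    l.getD (l.findIdx (fun v => decide (v ∈ X))) y ∈ X ∧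
    l.eraseIdx (l.findIdx (fun v => decide (v ∈ X))) =
      y :: (((l.eraseIdx (l.findIdx (fun v => decide (v ∈ X)))).tail).dropLast ++ [z]) ∧
    (((l.eraseIdx (l.findIdx (fun v => decide (v ∈ X)))).tail).dropLast).length = m - 2 ∧
    l = (l.eraseIdx (l.findIdx (fun v => decide (v ∈ X)))).insertIdx
        (l.findIdx fun v => decide (v ∈ X)) (l.getD (l.findIdx fun v => decide (v ∈ X)) y) := by
  obtain ⟨t, rfl⟩ : ∃ t, l = y :: t := by
    cases l with
    | nil => simp at hhead
    | cons a t => exact ⟨t, by rw [show a = y by simpa using hhead]⟩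
  have htlen : t.length = m := by simpa using hlen
  set i := (y :: t).findIdx (fun v => decide (v ∈ X)) with hidef
  have hilt : i < (y :: t).length :=
    List.findIdx_lt_length_of_exists
      (by obtain ⟨v, hv1, hv2⟩ := hex; exact ⟨v, hv1, by simpa⟩)
  have hiX : (y :: t)[i] ∈ X := by
    have := List.findIdx_getElem (w := hilt)
    simpa using this
  have hgetD : (y :: t).getD i y = (y :: t)[i] := List.getD_eq_getElem _ _ hilt
  have hi1 : 1 ≤ i := by
    rcases Nat.eq_zero_or_pos i with h0 | h1
    · exfalso
      rw [getElem_idx_congr _ h0 hilt] at hiX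
      simp at hiX
      exact hyX hiX
    · exact h1
  have hne : (y :: t) ≠ [] := by simp
  have hlast' : (y :: t).getLast hne = z := by
    rw [List.getLast?_eq_getLast hne] at hlast
    exact Option.some.inj hlast
  have hmlt : m < (y :: t).length := by simp [htlen]
  have hlg : (y :: t)[m]'hmlt = z := by
    have h2 := List.getLast_eq_getElem hne
    rw [h2] at hlast'
    rw [getElem_idx_congr (y :: t) (show m = (y :: t).length - 1 by simp [htlen]) hmlt]
    exact hlast'
  have him : i < m := by
    have hile : i ≤ m := by
      have := hilt; simp [htlen] at this; omega
    rcases eq_or_lt_of_le hile with heq | hlt2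
    · exfalso
      rw [getElem_idx_congr _ heq hilt] at hiX
      rw [hlg] at hiX
      exact hzX hiX
    · exact hlt2
  have hierase : (y :: t).eraseIdx i = y :: t.eraseIdx (i - 1) := by
    obtain ⟨j, hj⟩ : ∃ j, i = j + 1 := ⟨i - 1, by omega⟩
    rw [hj]
    simp [List.eraseIdx_cons_succ]
  have hjlt : i - 1 < t.length := by omega
  have ht'len : (t.eraseIdx (i - 1)).length = m - 1 := by
    rw [List.length_eraseIdx, if_pos hjlt, htlen]
  have ht'ne : t.eraseIdx (i - 1) ≠ [] := by
    intro hc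
    rw [hc] at ht'len
    simp at ht'len
    omega
  have hlastidx : (t.eraseIdx (i - 1)).length - 1 < (t.eraseIdx (i - 1)).length := by
    rw [ht'len]; omega
  have ht'last : (t.eraseIdx (i - 1)).getLast ht'ne = z := by
    rw [List.getLast_eq_getElem ht'ne,
      getElem_idx_congr _ (show (t.eraseIdx (i - 1)).length - 1 = m - 2 by omega) hlastidx,
      List.getElem_eraseIdx]
    · have hdite : ¬ (m - 2 < i - 1) := by omega
      rw [dif_neg hdite]
      have h6 : (y :: t)[m]'hmlt = (y :: t)[m - 2 + 1 + 1]'(by omega) :=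
        getElem_idx_congr _ (by omega) hmlt
      have h7 : (y :: t)[m - 2 + 1 + 1]'(by omega) = t[m - 2 + 1]'(by omega) := by simp
      exact h7.symm.trans (h6.symm.trans hlg)
  have hErec : (y :: t).eraseIdx i =
      y :: ((((y :: t).eraseIdx i).tail).dropLast ++ [z]) := by
    rw [hierase]
    simp only [List.tail_cons]
    congr 1
    conv_lhs => rw [← List.dropLast_append_getLast ht'ne, ht'last]
  refine ⟨by omega, him, by rw [hgetD]; exact hiX, hErec, ?_, ?_⟩
  · rw [hierase]
    simp only [List.tail_cons, List.length_dropLast, ht'len]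
    omega
  · rw [hgetD]
    exact (insertIdx_getElem_eraseIdx (y :: t) i hilt).symm

end Stmt14Aux
set_option maxHeartbeats 1000000 in
/-- Lemma 2.26: with `θ = min{α/4, β/(2ℓ)}`, if `Ψ` is a `k`-uniform `(α, β, ℓ, μ)`-constellation
on `n ≥ 6k` vertices and `S, X ⊆ V(Ψ)` are disjoint with `|S| ≤ k-2`, `|X| ≤ θn`, then
`Ψ_S − X` is an `(α/2, β/2, ℓ, 2μ)`-constellation (of uniformity `k - |S|`). -/
theorem stmt14 {V : Type*} [Fintype V] [DecidableEq V] (k : ℕ) (hk : 2 ≤ k)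
    (α β μ : ℝ) (hα : 0 < α) (hβ : 0 < β) (hμ : 0 < μ)
    (ℓ : ℕ) (hℓ : 3 ≤ ℓ) (hodd : Odd ℓ)
    (Ψ : Constellation V) (h : IsConst k Ψ α β ℓ μ)
    (hn : 6 * k ≤ Ψ.verts.card)
    (S X : Finset V) (hSV : S ⊆ Ψ.verts) (hXV : X ⊆ Ψ.verts)
    (hdisj : Disjoint S X) (hS : S.card ≤ k - 2)
    (hX : (X.card : ℝ) ≤ min (α / 4) (β / (2 * (ℓ : ℝ))) * (Ψ.verts.card : ℝ)) :
    IsConst (k - S.card) ((Ψ.link S).remove X) (α / 2) (β / 2) ℓ (2 * μ) := by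
  classical
  obtain ⟨⟨huni, hAM⟩, hpaths⟩ := h
  set n := Ψ.verts.card with hn_def
  set Ψ' := (Ψ.link S).remove X with hΨ'def
  have hn12 : 12 ≤ n := by omega
  have hNpos : (0 : ℝ) < (n : ℝ) := by exact_mod_cast (by omega : 0 < n)
  have hn12R : (12 : ℝ) ≤ (n : ℝ) := by exact_mod_cast hn12
  have hverts' : Ψ'.verts = (Ψ.verts \ S) \ X := remove_link_verts Ψ S X
  have hmemE' : ∀ f : Finset V, f ∈ Ψ'.edges ↔
      ∃ e ∈ Ψ.edges, S ⊆ e ∧ e ∩ X = ∅ ∧ f = e \ S :=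
    fun f => mem_remove_link_edges (fun e he => (huni e he).1) hdisj
  have hXVS : X ⊆ Ψ.verts \ S := fun v hv =>
    Finset.mem_sdiff.mpr ⟨hXV hv, fun hvS => Finset.disjoint_left.mp hdisj hvS hv⟩
  have hn'card : Ψ'.verts.card + (S.card + X.card) = n := by
    have h1 : S.card ≤ n := Finset.card_le_card hSV
    have h2 : X.card ≤ (Ψ.verts \ S).card := Finset.card_le_card hXVS
    rw [Finset.card_sdiff_of_subset hSV] at h2
    rw [hverts', Finset.card_sdiff_of_subset hXVS, Finset.card_sdiff_of_subset hSV]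
    omega
  have hN' : ((Ψ'.verts.card : ℝ)) = (n : ℝ) - S.card - X.card := by
    have : ((Ψ'.verts.card : ℝ)) + (S.card + X.card) = (n : ℝ) := by exact_mod_cast hn'card
    linarith
  have hN'nonneg : (0 : ℝ) ≤ (Ψ'.verts.card : ℝ) := Nat.cast_nonneg _
  have hN'leN : ((Ψ'.verts.card : ℝ)) ≤ (n : ℝ) := by
    rw [hN']
    have : (0:ℝ) ≤ (S.card : ℝ) := Nat.cast_nonneg _
    have : (0:ℝ) ≤ (X.card : ℝ) := Nat.cast_nonneg _
    linarith [Nat.cast_nonneg (α := ℝ) S.card, Nat.cast_nonneg (α := ℝ) X.card]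
  have htX : ((X.card : ℝ)) ≤ α / 4 * (n : ℝ) :=
    hX.trans (mul_le_mul_of_nonneg_right (min_le_left _ _) hNpos.le)
  have htXβ : ((X.card : ℝ)) ≤ β / (2 * (ℓ : ℝ)) * (n : ℝ) :=
    hX.trans (mul_le_mul_of_nonneg_right (min_le_right _ _) hNpos.le)
  have hsR : ((S.card : ℝ)) ≤ (n : ℝ) / 6 := by
    have : (6 * S.card : ℕ) ≤ n := by omega
    have := (Nat.cast_le (α := ℝ)).mpr this
    push_cast at this
    linarith
  -- α ≤ 4/9
  have hα49 : α ≤ 4 / 9 := by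
    obtain ⟨x₀, hx₀sub, hx₀card⟩ := Finset.exists_subset_card_eq (show k - 2 ≤ n by omega)
    have hdeg := (hAM x₀ hx₀sub hx₀card).1
    have hcount : (Ψ.edges.filter fun e => x₀ ⊆ e).card ≤ n.choose 2 := by
      rw [← Finset.card_powersetCard 2 Ψ.verts]
      apply Finset.card_le_card_of_injOn (fun e => e \ x₀)
      · intro e he
        rw [Finset.mem_coe, Finset.mem_filter] at he
        obtain ⟨hev, hec⟩ := huni e he.1
        rw [Finset.mem_coe, Finset.mem_powersetCard]
        refine ⟨fun v hv => hev (Finset.mem_sdiff.mp hv).1, ?_⟩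
        rw [Finset.card_sdiff_of_subset he.2, hec, hx₀card]
        omega
      · intro e1 h1 e2 h2 he
        simp only [Finset.coe_filter, Set.mem_setOf_eq] at h1 h2
        have h3 := congrArg (· ∪ x₀) he
        simpa [Finset.sdiff_union_of_subset h1.2, Finset.sdiff_union_of_subset h2.2] using h3
    have hch : ((n.choose 2 : ℕ) : ℝ) ≤ (n : ℝ) ^ 2 / 2 := by
      rw [Nat.choose_two_right]
      refine le_trans Nat.cast_div_le ?_
      have : ((n * (n - 1) : ℕ) : ℝ) ≤ (n : ℝ) ^ 2 := by
        push_cast [Nat.cast_sub (by omega : 1 ≤ n)]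
        nlinarith [hNpos]
      linarith
    have hfin : (5 / 9 + α) * (n : ℝ) ^ 2 / 2 ≤ (n : ℝ) ^ 2 / 2 :=
      le_trans hdeg (le_trans (Nat.cast_le.mpr hcount) hch)
    nlinarith [pow_pos hNpos 2]
  have hN13 : 13 / 18 * (n : ℝ) ≤ ((Ψ'.verts.card : ℝ)) := by
    rw [hN']
    nlinarith [htX, hsR, hNpos.le, hα49]
  -- W is disjoint from its base set
  have hWdisj : ∀ x' ⊆ Ψ.verts, x'.card = k - 2 → ∀ y ∈ Ψ.W x', y ∉ x' := by
    intro x' hx'sub hx'card y hyW hyx'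
    have hWc := (hAM x' hx'sub hx'card).2.2.1
    have h1W : 1 < (Ψ.W x').card := by
      have h1 : (1 : ℝ) < (2 / 3 + α / 2) * n := by nlinarith
      exact_mod_cast h1.trans_le hWc
    obtain ⟨z, hzW, hzy⟩ := Finset.exists_mem_ne h1W y
    have hp := hpaths x' hx'sub hx'card y hyW z hzW (fun he => hzy he.symm)
    have hset : {l : List V | l.length = ℓ + 1 ∧ l.Nodup ∧ (∀ v ∈ l, v ∈ Ψ.W x') ∧
        l.head? = some y ∧ l.getLast? = some z ∧
        l.Chain' (fun u v => ({u, v} : Finset V) ∈ (Ψ.link x').edges)} = ∅ := by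
      ext l
      simp only [Set.mem_setOf_eq, Set.mem_empty_iff_false, iff_false]
      rintro ⟨hlen, hnd, hmem, hhead, hlast, hchain⟩
      cases l with
      | nil => simp at hhead
      | cons a t =>
        have ha : a = y := by simpa using hhead
        subst ha
        cases t with
        | nil => simp at hlen; omega
        | cons b t2 =>
          have hedge := (List.isChain_cons_cons.mp hchain).1
          rw [mem_link_edges] at hedge
          obtain ⟨e, he, hxe, hep⟩ := hedge
          have hm : a ∈ e \ x' := by rw [hep]; simp
          exact (Finset.mem_sdiff.mp hm).2 hyx'
    have hzero : pathCount Ψ x' y z ℓ = 0 := by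
      unfold pathCount
      rw [hset]
      simp
    rw [hzero] at hp
    have hpow : (0 : ℝ) < β * (n : ℝ) ^ (ℓ - 1) := by positivity
    simp only [Nat.cast_zero] at hp
    linarith
  -- common setup for a (k - |S| - 2)-set x in Ψ'
  have hsetup : ∀ x : Finset V, x ⊆ Ψ'.verts → x.card = k - S.card - 2 →
      (x ∪ S ⊆ Ψ.verts) ∧ (x ∪ S).card = k - 2 ∧ Disjoint x S ∧ Disjoint x X ∧
      Ψ'.W x = Ψ.W (x ∪ S) \ X := by
    intro x hx hxc
    have hxsub : ∀ v ∈ x, v ∈ Ψ.verts ∧ v ∉ S ∧ v ∉ X := by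
      intro v hv
      have hm := hx hv
      rw [hverts', Finset.mem_sdiff, Finset.mem_sdiff] at hm
      exact ⟨hm.1.1, hm.1.2, hm.2⟩
    have hxS : Disjoint x S := Finset.disjoint_left.mpr fun {v} hv => (hxsub v hv).2.1
    have hxX : Disjoint x X := Finset.disjoint_left.mpr fun {v} hv => (hxsub v hv).2.2
    have hsub : x ∪ S ⊆ Ψ.verts := Finset.union_subset (fun v hv => (hxsub v hv).1) hSV
    have hcard : (x ∪ S).card = k - 2 := by
      rw [Finset.card_union_of_disjoint hxS]
      omega
    refine ⟨hsub, hcard, hxS, hxX, ?_⟩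
    have hWsub := (hAM _ hsub hcard).2.1
    have hWd := hWdisj _ hsub hcard
    rw [hΨ'def, remove_link_W]
    ext v
    simp only [Finset.mem_inter, Finset.mem_sdiff]
    constructor
    · rintro ⟨⟨hvW, -⟩, ⟨-, -⟩, hvX⟩
      exact ⟨hvW, hvX⟩
    · rintro ⟨hvW, hvX⟩
      have hvS : v ∉ S := fun hvS => hWd v hvW (Finset.mem_union_right _ hvS)
      exact ⟨⟨hvW, hvS⟩, ⟨⟨hWsub hvW, hvS⟩, hvX⟩⟩
  constructor
  · constructor
    · -- uniformity
      intro f hf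
      obtain ⟨e, he, hSe, heX, rfl⟩ := (hmemE' f).mp hf
      constructor
      · intro v hv
        rw [hverts']
        rw [Finset.mem_sdiff] at hv
        refine Finset.mem_sdiff.mpr ⟨Finset.mem_sdiff.mpr ⟨(huni e he).1 hv.1, hv.2⟩, fun hvX => ?_⟩
        rw [Finset.eq_empty_iff_forall_notMem] at heX
        exact heX v (Finset.mem_inter.mpr ⟨hv.1, hvX⟩)
      · rw [Finset.card_sdiff_of_subset hSe, (huni e he).2]
    · -- (α/2, 2μ) conditions
      intro x hx hxc
      obtain ⟨hxSsub, hxScard, hxS, hxX, hW'⟩ := hsetup x hx hxc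
      obtain ⟨hdeg, hWsub, hWcard, hcross⟩ := hAM (x ∪ S) hxSsub hxScard
      have hWd := hWdisj (x ∪ S) hxSsub hxScard
      refine ⟨?_, ?_, ?_, ?_⟩
      · -- degree
        have hEfilter : Ψ'.edges.filter (fun f => x ⊆ f) =
            (Ψ.edges.filter fun e => (x ∪ S) ⊆ e ∧ e ∩ X = ∅).image (· \ S) := by
          ext f
          simp only [Finset.mem_filter, Finset.mem_image, hmemE' f]
          constructor
          · rintro ⟨⟨e, he, hSe, heX, rfl⟩, hxf⟩
            exact ⟨e, ⟨he, Finset.union_subset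
              (fun v hv => (Finset.mem_sdiff.mp (hxf hv)).1) hSe, heX⟩, rfl⟩
          · rintro ⟨e, ⟨he, hxSe, heX⟩, rfl⟩
            refine ⟨⟨e, he, (Finset.union_subset_iff.mp hxSe).2, heX, rfl⟩, fun v hv => ?_⟩
            exact Finset.mem_sdiff.mpr ⟨hxSe (Finset.mem_union_left _ hv),
              Finset.disjoint_left.mp hxS hv⟩
        have hdegeq : (Ψ'.edges.filter fun f => x ⊆ f).card =
            (Ψ.edges.filter fun e => (x ∪ S) ⊆ e ∧ e ∩ X = ∅).card := by
          rw [hEfilter]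
          apply Finset.card_image_of_injOn
          intro e1 h1 e2 h2 hee
          simp only [Finset.coe_filter, Set.mem_setOf_eq] at h1 h2
          have hS1 : S ⊆ e1 := (Finset.union_subset_iff.mp h1.2.1).2
          have hS2 : S ⊆ e2 := (Finset.union_subset_iff.mp h2.2.1).2
          have h3 := congrArg (· ∪ S) hee
          simpa [Finset.sdiff_union_of_subset hS1, Finset.sdiff_union_of_subset hS2] using h3
        have hsplit : (Ψ.edges.filter fun e => (x ∪ S) ⊆ e).card ≤
            (Ψ.edges.filter fun e => (x ∪ S) ⊆ e ∧ e ∩ X = ∅).card +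
            (Ψ.edges.filter fun e => (x ∪ S) ⊆ e ∧ (e ∩ X).Nonempty).card := by
          refine le_trans (Finset.card_le_card ?_) (Finset.card_union_le _ _)
          intro e he
          rw [Finset.mem_filter] at he
          rcases Finset.eq_empty_or_nonempty (e ∩ X) with hE | hE
          · exact Finset.mem_union_left _ (Finset.mem_filter.mpr ⟨he.1, he.2, hE⟩)
          · exact Finset.mem_union_right _ (Finset.mem_filter.mpr ⟨he.1, he.2, hE⟩)
        have hmeet : (Ψ.edges.filter fun e => (x ∪ S) ⊆ e ∧ (e ∩ X).Nonempty).card ≤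
            X.card * n := by
          have hsub : Ψ.edges.filter (fun e => (x ∪ S) ⊆ e ∧ (e ∩ X).Nonempty) ⊆
              X.biUnion fun v => Ψ.edges.filter fun e => (x ∪ S) ⊆ e ∧ v ∈ e := by
            intro e he
            rw [Finset.mem_filter] at he
            obtain ⟨v, hv⟩ := he.2.2
            rw [Finset.mem_inter] at hv
            exact Finset.mem_biUnion.mpr ⟨v, hv.2, Finset.mem_filter.mpr ⟨he.1, he.2.1, hv.1⟩⟩
          refine le_trans (Finset.card_le_card hsub) (le_trans Finset.card_biUnion_le ?_)
          have hbound : ∀ v ∈ X, (Ψ.edges.filter fun e => (x ∪ S) ⊆ e ∧ v ∈ e).card ≤ n := by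
            intro v hvX
            have hvnot : v ∉ x ∪ S := by
              rw [Finset.mem_union]
              rintro (hv | hv)
              · exact Finset.disjoint_left.mp hxX hv hvX
              · exact Finset.disjoint_left.mp hdisj hv hvX
            have hsub2 : Ψ.edges.filter (fun e => (x ∪ S) ⊆ e ∧ v ∈ e) ⊆
                Ψ.verts.image fun w => insert w (insert v (x ∪ S)) := by
              intro e he
              rw [Finset.mem_filter] at he
              obtain ⟨he1, hxSe, hve⟩ := he
              have hBe : insert v (x ∪ S) ⊆ e := Finset.insert_subset hve hxSe
              have hcB : (insert v (x ∪ S)).card = k - 1 := by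
                rw [Finset.card_insert_of_notMem hvnot, hxScard]
                omega
              have hcd : (e \ insert v (x ∪ S)).card = 1 := by
                rw [Finset.card_sdiff_of_subset hBe, (huni e he1).2, hcB]
                omega
              obtain ⟨w, hw⟩ := Finset.card_eq_one.mp hcd
              have hwe : w ∈ e := by
                have hm : w ∈ e \ insert v (x ∪ S) := by rw [hw]; simp
                exact (Finset.mem_sdiff.mp hm).1
              refine Finset.mem_image.mpr ⟨w, (huni e he1).1 hwe, ?_⟩
              have h4 := Finset.sdiff_union_of_subset hBe
              rw [hw] at h4
              rw [← h4, Finset.insert_eq]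
            exact le_trans (Finset.card_le_card hsub2) Finset.card_image_le
          refine le_trans (Finset.sum_le_sum hbound) ?_
          rw [Finset.sum_const, smul_eq_mul]
        have hdegN : (Ψ.edges.filter fun e => (x ∪ S) ⊆ e).card ≤
            (Ψ'.edges.filter fun f => x ⊆ f).card + X.card * n := by
          rw [hdegeq]
          omega
        have hdegR : (5 / 9 + α) * (n : ℝ) ^ 2 / 2 ≤
            ((Ψ'.edges.filter fun f => x ⊆ f).card : ℝ) + (X.card : ℝ) * n := by
          refine le_trans hdeg ?_
          exact_mod_cast Nat.cast_le.mpr hdegN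
        have hsq : ((Ψ'.verts.card : ℝ)) ^ 2 ≤ (n : ℝ) ^ 2 := by nlinarith
        have hp1 : (X.card : ℝ) * n ≤ α / 4 * (n : ℝ) ^ 2 := by nlinarith [htX, hNpos.le]
        have hp2 : (5 / 9 + α / 2) * ((Ψ'.verts.card : ℝ)) ^ 2 ≤ (5 / 9 + α / 2) * (n : ℝ) ^ 2 :=
          mul_le_mul_of_nonneg_left hsq (by linarith)
        linarith
      · -- W ⊆ verts
        rw [hW', hverts']
        intro v hv
        rw [Finset.mem_sdiff] at hv
        exact Finset.mem_sdiff.mpr ⟨Finset.mem_sdiff.mpr ⟨hWsub hv.1,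
          fun hvS => hWd v hv.1 (Finset.mem_union_right _ hvS)⟩, hv.2⟩
      · -- W size
        rw [hW']
        have hc : (Ψ.W (x ∪ S)).card ≤ (Ψ.W (x ∪ S) \ X).card + X.card := by
          have := Finset.card_sdiff_add_card_inter (Ψ.W (x ∪ S)) X
          have h2 : (Ψ.W (x ∪ S) ∩ X).card ≤ X.card :=
            Finset.card_le_card Finset.inter_subset_right
          omega
        have hcR : ((Ψ.W (x ∪ S)).card : ℝ) ≤ ((Ψ.W (x ∪ S) \ X).card : ℝ) + X.card := by
          exact_mod_cast hc
        rw [hN']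
        nlinarith [Nat.cast_nonneg (α := ℝ) S.card, Nat.cast_nonneg (α := ℝ) X.card,
          mul_le_mul_of_nonneg_right htX (by linarith : (0:ℝ) ≤ 1/3 - α/4)]
      · -- crossCount
        have hsub : ((Ψ'.link x).edges.filter fun p =>
              (p ∩ Ψ'.W x).Nonempty ∧ (p \ Ψ'.W x).Nonempty) ⊆
            ((Ψ.link (x ∪ S)).edges.filter fun p =>
              (p ∩ Ψ.W (x ∪ S)).Nonempty ∧ (p \ Ψ.W (x ∪ S)).Nonempty) := by
          intro p hp
          rw [Finset.mem_filter] at hp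
          obtain ⟨hpmem, hp1, hp2⟩ := hp
          rw [mem_link_edges] at hpmem
          obtain ⟨f, hf, hxf, hfp⟩ := hpmem
          obtain ⟨e, he, hSe, heX, rfl⟩ := (hmemE' f).mp hf
          have hpe : p = e \ (x ∪ S) := by
            rw [← hfp]
            ext w
            simp only [Finset.mem_sdiff, Finset.mem_union]
            tauto
          have heXv : ∀ w ∈ e, w ∉ X := by
            intro w hw hwX
            rw [Finset.eq_empty_iff_forall_notMem] at heX
            exact heX w (Finset.mem_inter.mpr ⟨hw, hwX⟩)
          rw [Finset.mem_filter]
          refine ⟨?_, ?_, ?_⟩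
          · rw [mem_link_edges]
            exact ⟨e, he, Finset.union_subset
              (fun v hv => (Finset.mem_sdiff.mp (hxf hv)).1) hSe, hpe.symm⟩
          · obtain ⟨u, hu⟩ := hp1
            rw [Finset.mem_inter] at hu
            have huW : u ∈ Ψ.W (x ∪ S) := by
              have := hu.2
              rw [hW', Finset.mem_sdiff] at this
              exact this.1
            exact ⟨u, Finset.mem_inter.mpr ⟨hu.1, huW⟩⟩
          · obtain ⟨u, hu⟩ := hp2
            rw [Finset.mem_sdiff] at hu
            refine ⟨u, Finset.mem_sdiff.mpr ⟨hu.1, fun huW => hu.2 ?_⟩⟩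
            rw [hW', Finset.mem_sdiff]
            refine ⟨huW, ?_⟩
            have hue : u ∈ e := by
              have := hu.1
              rw [hpe, Finset.mem_sdiff] at this
              exact this.1
            exact heXv u hue
        have hcc : crossCount Ψ' x ≤ crossCount Ψ (x ∪ S) := by
          unfold crossCount
          exact Finset.card_le_card hsub
        have h2sq : (n : ℝ) ^ 2 ≤ 2 * ((Ψ'.verts.card : ℝ)) ^ 2 := by
          nlinarith [mul_le_mul hN13 hN13 (by positivity) hN'nonneg]
        calc ((crossCount Ψ' x : ℕ) : ℝ) ≤ ((crossCount Ψ (x ∪ S) : ℕ) : ℝ) :=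
              Nat.cast_le.mpr hcc
          _ ≤ μ * (n : ℝ) ^ 2 := hcross
          _ ≤ 2 * μ * ((Ψ'.verts.card : ℝ)) ^ 2 := by nlinarith [hμ.le, h2sq]
  · -- path counts
    intro x hx hxc y hy z hz hyz
    obtain ⟨hxSsub, hxScard, hxS, hxX, hW'⟩ := hsetup x hx hxc
    obtain ⟨hdeg, hWsub, hWcard, hcross⟩ := hAM (x ∪ S) hxSsub hxScard
    rw [hW', Finset.mem_sdiff] at hy hz
    obtain ⟨hyW, hyX⟩ := hy
    obtain ⟨hzW, hzX⟩ := hz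
    have hold := hpaths (x ∪ S) hxSsub hxScard y hyW z hzW hyz
    rw [pathCount_eq_card] at hold
    rw [pathCount_eq_card]
    set Fold := (listsOf (Ψ.W (x ∪ S)) (ℓ + 1)).filter (fun l =>
      l.Nodup ∧ l.head? = some y ∧ l.getLast? = some z ∧
      l.Chain' fun u v => ({u, v} : Finset V) ∈ (Ψ.link (x ∪ S)).edges) with hFoldDef
    set Fnew := (listsOf (Ψ'.W x) (ℓ + 1)).filter (fun l =>
      l.Nodup ∧ l.head? = some y ∧ l.getLast? = some z ∧
      l.Chain' fun u v => ({u, v} : Finset V) ∈ (Ψ'.link x).edges) with hFnewDef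
    clear_value Fold Fnew
    have hsplitF : Fold.card ≤ (Fold.filter fun l => ∀ v ∈ l, v ∉ X).card +
        (Fold.filter fun l => ¬ ∀ v ∈ l, v ∉ X).card :=
      le_of_eq (Finset.card_filter_add_card_filter_not
        (p := fun l => ∀ v ∈ l, v ∉ X)).symm
    have hgood : Fold.filter (fun l => ∀ v ∈ l, v ∉ X) ⊆ Fnew := by
      intro l hl
      rw [Finset.mem_filter] at hl
      obtain ⟨hlF, hlX⟩ := hl
      rw [hFoldDef, Finset.mem_filter, mem_listsOf] at hlF
      obtain ⟨⟨hlen, hmem⟩, hnd, hhead, hlast, hchain⟩ := hlF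
      rw [hFnewDef, Finset.mem_filter, mem_listsOf]
      refine ⟨⟨hlen, fun v hv => ?_⟩, hnd, hhead, hlast, ?_⟩
      · rw [hW', Finset.mem_sdiff]
        exact ⟨hmem v hv, hlX v hv⟩
      · refine chain'_mono_mem (P := fun v => v ∈ Ψ.W (x ∪ S) ∧ v ∉ X) ?_
          (fun v hv => ⟨hmem v hv, hlX v hv⟩) hchain
        intro u v hu hv huv
        rw [mem_link_edges] at huv ⊢
        obtain ⟨e, he, hxSe, hep⟩ := huv
        have heeq : e = (x ∪ S) ∪ ({u, v} : Finset V) := by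
          rw [← hep]
          exact (Finset.union_sdiff_of_subset hxSe).symm
        have heX : e ∩ X = ∅ := by
          rw [Finset.eq_empty_iff_forall_notMem]
          intro w hw
          rw [Finset.mem_inter] at hw
          have hwe := hw.1
          rw [heeq, Finset.mem_union, Finset.mem_union, Finset.mem_insert,
            Finset.mem_singleton] at hwe
          rcases hwe with (hwx | hwS) | (rfl | rfl)
          · exact Finset.disjoint_left.mp hxX hwx hw.2
          · exact Finset.disjoint_left.mp hdisj hwS hw.2
          · exact hu.2 hw.2
          · exact hv.2 hw.2
        refine ⟨e \ S, (hmemE' _).mpr ⟨e, he, (Finset.union_subset_iff.mp hxSe).2, heX, rfl⟩,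
          fun w hw => ?_, ?_⟩
        · exact Finset.mem_sdiff.mpr ⟨hxSe (Finset.mem_union_left _ hw),
            Finset.disjoint_left.mp hxS hw⟩
        · rw [← hep]
          ext w
          simp only [Finset.mem_sdiff, Finset.mem_union]
          tauto
    have hbad : (Fold.filter fun l => ¬ ∀ v ∈ l, v ∉ X).card ≤
        (ℓ - 1) * (X.card * n ^ (ℓ - 2)) := by
      have hcardT : ((Finset.Ico 1 ℓ) ×ˢ (X ×ˢ listsOf Ψ.verts (ℓ - 2))).card =
          (ℓ - 1) * (X.card * n ^ (ℓ - 2)) := by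
        rw [Finset.card_product, Finset.card_product, Nat.card_Ico, card_listsOf]
      rw [← hcardT]
      apply Finset.card_le_card_of_injOn (fun l =>
        (l.findIdx (fun v => decide (v ∈ X)),
          (l.getD (l.findIdx fun v => decide (v ∈ X)) y,
          ((l.eraseIdx (l.findIdx fun v => decide (v ∈ X))).tail).dropLast)))
      · intro l hl
        rw [Finset.mem_coe, Finset.mem_filter] at hl
        obtain ⟨hlF, hlX⟩ := hl
        push_neg at hlX
        rw [hFoldDef, Finset.mem_filter, mem_listsOf] at hlF
        obtain ⟨⟨hlen, hmem⟩, hnd, hhead, hlast, hchain⟩ := hlF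
        obtain ⟨h1, h2, h3, h4, h5, h6⟩ :=
          path_list_facts (m := ℓ) (by omega) hlen hhead hlast hyX hzX hlX
        rw [Finset.mem_coe, Finset.mem_product, Finset.mem_product]
        refine ⟨Finset.mem_Ico.mpr ⟨h1, h2⟩, h3, ?_⟩
        rw [mem_listsOf]
        refine ⟨h5, fun v hv => ?_⟩
        have hsubl : (((l.eraseIdx (l.findIdx fun v => decide (v ∈ X))).tail).dropLast).Sublist l :=
          ((List.dropLast_sublist _).trans (List.tail_sublist _)).trans
            (List.eraseIdx_sublist _ _)
        exact hWsub (hmem v (hsubl.mem hv))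
      · intro l1 hl1 l2 hl2 heq
        simp only [Finset.coe_filter, Set.mem_setOf_eq] at hl1 hl2
        obtain ⟨hlF1, hlX1⟩ := hl1
        obtain ⟨hlF2, hlX2⟩ := hl2
        push_neg at hlX1 hlX2
        rw [hFoldDef, Finset.mem_filter, mem_listsOf] at hlF1 hlF2
        obtain ⟨⟨hlen1, hmem1⟩, hnd1, hhead1, hlast1, hchain1⟩ := hlF1
        obtain ⟨⟨hlen2, hmem2⟩, hnd2, hhead2, hlast2, hchain2⟩ := hlF2
        obtain ⟨-, -, -, hE1, -, hrec1⟩ :=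
          path_list_facts (m := ℓ) (by omega) hlen1 hhead1 hlast1 hyX hzX hlX1
        obtain ⟨-, -, -, hE2, -, hrec2⟩ :=
          path_list_facts (m := ℓ) (by omega) hlen2 hhead2 hlast2 hyX hzX hlX2
        simp only [Prod.mk.injEq] at heq
        obtain ⟨hieq, hdeq, hmideq⟩ := heq
        have hEeq : l1.eraseIdx (l1.findIdx fun v => decide (v ∈ X)) =
            l2.eraseIdx (l2.findIdx fun v => decide (v ∈ X)) := by
          rw [hE1, hmideq, ← hE2]
        have hfinal : ((l1.eraseIdx (l1.findIdx fun v => decide (v ∈ X))).insertIdx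
              (l1.findIdx fun v => decide (v ∈ X))
              (l1.getD (l1.findIdx fun v => decide (v ∈ X)) y)) =
            ((l2.eraseIdx (l2.findIdx fun v => decide (v ∈ X))).insertIdx
              (l2.findIdx fun v => decide (v ∈ X))
              (l2.getD (l2.findIdx fun v => decide (v ∈ X)) y)) := by
          rw [hdeq, hEeq, hieq]
        exact hrec1.trans (hfinal.trans hrec2.symm)
    have hgoodcard : (Fold.filter fun l => ∀ v ∈ l, v ∉ X).card ≤ Fnew.card :=
      Finset.card_le_card hgood
    have hcards : Fold.card ≤ Fnew.card + (ℓ - 1) * (X.card * n ^ (ℓ - 2)) := by omega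
    have hcardsR : (Fold.card : ℝ) ≤ (Fnew.card : ℝ) +
        ((ℓ : ℝ) - 1) * ((X.card : ℝ) * (n : ℝ) ^ (ℓ - 2)) := by
      have hc := (Nat.cast_le (α := ℝ)).mpr hcards
      push_cast [Nat.cast_sub (show 1 ≤ ℓ by omega)] at hc
      convert hc using 2 <;> push_cast <;> ring
    have hL : (3 : ℝ) ≤ (ℓ : ℝ) := by exact_mod_cast hℓ
    have ht2 : 2 * (ℓ : ℝ) * (X.card : ℝ) ≤ β * (n : ℝ) := by
      have h0 := mul_le_mul_of_nonneg_left htXβ (by positivity : (0:ℝ) ≤ 2 * (ℓ:ℝ))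
      calc 2 * (ℓ:ℝ) * (X.card:ℝ) ≤ 2 * (ℓ:ℝ) * (β / (2 * (ℓ:ℝ)) * (n:ℝ)) := h0
        _ = β * (n:ℝ) := by field_simp
    have hstep1 : ((ℓ:ℝ) - 1) * (X.card:ℝ) ≤ β / 2 * (n:ℝ) := by
      linarith [Nat.cast_nonneg (α := ℝ) X.card]
    have hA : (0:ℝ) ≤ (n:ℝ) ^ (ℓ - 2) := by positivity
    have hstep2 : ((ℓ:ℝ) - 1) * ((X.card:ℝ) * (n:ℝ) ^ (ℓ - 2)) ≤
        β / 2 * ((n:ℝ) * (n:ℝ) ^ (ℓ - 2)) := by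
      nlinarith [mul_le_mul_of_nonneg_right hstep1 hA]
    have hexp : (n:ℝ) ^ (ℓ - 1) = (n:ℝ) ^ (ℓ - 2) * (n:ℝ) := by
      rw [show ℓ - 1 = (ℓ - 2) + 1 by omega, pow_succ]
    have hmono : ((Ψ'.verts.card : ℝ)) ^ (ℓ - 1) ≤ (n:ℝ) ^ (ℓ - 1) :=
      pow_le_pow_left₀ hN'nonneg hN'leN _
    have hmono2 : β / 2 * ((Ψ'.verts.card : ℝ)) ^ (ℓ - 1) ≤ β / 2 * (n:ℝ) ^ (ℓ - 1) :=
      mul_le_mul_of_nonneg_left hmono (by linarith)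
    have hexpeq : β / 2 * ((n:ℝ) * (n:ℝ) ^ (ℓ - 2)) = β / 2 * (n:ℝ) ^ (ℓ - 1) := by
      rw [hexp]; ring
    linarith [hold, hcardsR, hstep2, hmono2, hexpeq]
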